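/- Parity-to-multidimensional-mean-payoff weight construction, player-2 side: With the weight function w_i(e) = 0 if p(e) > i, -1 if p(e) ≤ i odd, n if p(e) ≤ i even, let C be a simple cycle (length ≤ n) whose minimal priority i is odd, and let ℓ = n², λ = (ℓ^{k-1}, ℓ^{k-2}, ..., ℓ^0). Then the λ-weighted total weight of C satisfies w(C)ᵀ·λ ≤ -ℓ^{k-i} + (ℓ-1)·∑_{j=i+1}^{k} ℓ^{k-j} < 0. -/

import Mathlib

private lemma sum_le_neg_one (l : List ℤ) (h : ∀ x ∈ l, x ≤ 0)
    (hx : ∃ x ∈ l, x ≤ -1) : l.sum ≤ -1 := by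
  induction l with
  | nil => obtain ⟨x, hx, _⟩ := hx; simp at hx
  | cons a l ih =>
    have hl0 : l.sum ≤ 0 := by
      calc l.sum ≤ l.length • (0:ℤ) :=
            List.sum_le_card_nsmul l 0 (fun x hx => h x (List.mem_cons_of_mem a hx))
        _ = 0 := by simp
    obtain ⟨x, hxm, hx1⟩ := hx
    rcases List.mem_cons.mp hxm with rfl | hxl
    · simp only [List.sum_cons]; linarith
    · have h2 := ih (fun y hy => h y (List.mem_cons_of_mem a hy)) ⟨x, hxl, hx1⟩
      have ha := h a List.mem_cons_self
      simp only [List.sum_cons]; linarith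

private lemma sum_le_bound (c : ℤ) (hc : 0 ≤ c) (l : List ℤ) (h : ∀ x ∈ l, x ≤ c)
    (hx : ∃ x ∈ l, x ≤ -1) : l.sum ≤ c * ((l.length : ℤ) - 1) - 1 := by
  induction l with
  | nil => obtain ⟨x, hx, _⟩ := hx; simp at hx
  | cons a l ih =>
    have hl0 : l.sum ≤ c * (l.length : ℤ) := by
      calc l.sum ≤ l.length • c :=
            List.sum_le_card_nsmul l c (fun x hx => h x (List.mem_cons_of_mem a hx))
        _ = c * (l.length : ℤ) := by rw [nsmul_eq_mul]; ring
    obtain ⟨x, hxm, hx1⟩ := hx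
    rcases List.mem_cons.mp hxm with rfl | hxl
    · simp only [List.sum_cons, List.length_cons]
      push_cast
      linarith
    · have h2 := ih (fun y hy => h y (List.mem_cons_of_mem a hy)) ⟨x, hxl, hx1⟩
      have ha := h a List.mem_cons_self
      simp only [List.sum_cons, List.length_cons]
      push_cast
      linarith

private lemma geom_reindex (x : ℤ) (i k : ℕ) (hik : i ≤ k) :
    ∑ j ∈ Finset.Icc (i + 1) k, x ^ (k - j) = ∑ m ∈ Finset.range (k - i), x ^ m := by
  apply Finset.sum_nbij' (fun j => k - j) (fun m => k - m)
  · intro j hj; simp only [Finset.mem_Icc] at hj; simp only [Finset.mem_range]; omega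
  · intro m hm; simp only [Finset.mem_range] at hm; simp only [Finset.mem_Icc]; omega
  · intro j hj; simp only [Finset.mem_Icc] at hj; omega
  · intro m hm; simp only [Finset.mem_range] at hm; omega
  · intro j hj; rfl

theorem stmt_10 {E : Type*} (n k : ℕ) (hn : 2 ≤ n) (p : E → ℕ)
    (C : List E) (hlen : C.length ≤ n) (hp : ∀ e ∈ C, 1 ≤ p e ∧ p e ≤ k)
    (i : ℕ) (hi1 : 1 ≤ i) (hik : i ≤ k) (hodd : Odd i)
    (hmin : ∀ e ∈ C, i ≤ p e) (hmem : ∃ e ∈ C, p e = i) :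
    (∑ d ∈ Finset.Icc 1 k,
        (C.map (fun e =>
          if d < p e then (0 : ℤ) else if Odd (p e) then -1 else (n : ℤ))).sum *
          ((n : ℤ) ^ 2) ^ (k - d))
      ≤ -((n : ℤ) ^ 2) ^ (k - i) +
          ((n : ℤ) ^ 2 - 1) * ∑ j ∈ Finset.Icc (i + 1) k, ((n : ℤ) ^ 2) ^ (k - j) ∧
    -((n : ℤ) ^ 2) ^ (k - i) +
        ((n : ℤ) ^ 2 - 1) * ∑ j ∈ Finset.Icc (i + 1) k, ((n : ℤ) ^ 2) ^ (k - j) < 0 := by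
  set ℓ : ℤ := (n : ℤ) ^ 2 with hℓdef
  have hn' : (2 : ℤ) ≤ (n : ℤ) := by exact_mod_cast hn
  have hℓ4 : (4 : ℤ) ≤ ℓ := by nlinarith
  have hℓpos : (0 : ℤ) < ℓ := by linarith
  -- geometric sum identity
  have hgeom : (ℓ - 1) * ∑ j ∈ Finset.Icc (i + 1) k, ℓ ^ (k - j) = ℓ ^ (k - i) - 1 := by
    rw [geom_reindex ℓ i k hik, mul_comm, geom_sum_mul]
  have hsecond : -ℓ ^ (k - i) + (ℓ - 1) * ∑ j ∈ Finset.Icc (i + 1) k, ℓ ^ (k - j) < 0 := by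
    rw [hgeom]; ring_nf; linarith
  refine ⟨?_, hsecond⟩
  set f : ℕ → E → ℤ := fun d e => if d < p e then (0 : ℤ) else if Odd (p e) then -1 else (n : ℤ)
    with hf
  set S : ℕ → ℤ := fun d => (C.map (f d)).sum with hS
  obtain ⟨e₀, he₀C, he₀⟩ := hmem
  have hCpos : 1 ≤ C.length := List.length_pos_iff.mpr (List.ne_nil_of_mem he₀C)
  -- S d = 0 for d < i
  have hSzero : ∀ d, d < i → S d = 0 := by
    intro d hd
    apply List.sum_eq_zero
    intro x hxm
    obtain ⟨e, heC, rfl⟩ := List.mem_map.mp hxm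
    have := hmin e heC
    simp only [hf]
    rw [if_pos (by omega)]
  -- S i ≤ -1
  have hSi : S i ≤ -1 := by
    apply sum_le_neg_one
    · intro x hxm
      obtain ⟨e, heC, rfl⟩ := List.mem_map.mp hxm
      have hie := hmin e heC
      simp only [hf]
      rcases lt_or_eq_of_le hie with h | h
      · rw [if_pos h]
      · rw [if_neg (by omega), if_pos (h ▸ hodd)]; norm_num
    · refine ⟨f i e₀, List.mem_map.mpr ⟨e₀, he₀C, rfl⟩, ?_⟩
      simp only [hf]
      rw [he₀, if_neg (lt_irrefl i), if_pos hodd]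
  -- S d ≤ ℓ - 1 for i < d
  have hSd : ∀ d, i < d → S d ≤ ℓ - 1 := by
    intro d hd
    have hb : S d ≤ (n : ℤ) * (((C.map (f d)).length : ℤ) - 1) - 1 := by
      apply sum_le_bound _ (by linarith) _
      · intro x hxm
        obtain ⟨e, heC, rfl⟩ := List.mem_map.mp hxm
        simp only [hf]
        split_ifs <;> linarith
      · refine ⟨f d e₀, List.mem_map.mpr ⟨e₀, he₀C, rfl⟩, ?_⟩
        simp only [hf]
        rw [if_neg (by omega), he₀, if_pos hodd]
    rw [List.length_map] at hb
    have hlen' : (C.length : ℤ) ≤ (n : ℤ) := by exact_mod_cast hlen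
    have hCpos' : (1 : ℤ) ≤ (C.length : ℤ) := by exact_mod_cast hCpos
    nlinarith
  -- split the sum
  have hIccIoc : Finset.Icc 1 k = Finset.Ioc 0 k := by ext x; simp; omega
  have hsplit1 : ∑ d ∈ Finset.Ioc 0 i, S d * ℓ ^ (k - d)
      + ∑ d ∈ Finset.Ioc i k, S d * ℓ ^ (k - d)
      = ∑ d ∈ Finset.Ioc 0 k, S d * ℓ ^ (k - d) :=
    Finset.sum_Ioc_consecutive _ (Nat.zero_le i) hik
  have hsplit2 : ∑ d ∈ Finset.Ioc 0 (i-1), S d * ℓ ^ (k - d)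
      + ∑ d ∈ Finset.Ioc (i-1) i, S d * ℓ ^ (k - d)
      = ∑ d ∈ Finset.Ioc 0 i, S d * ℓ ^ (k - d) :=
    Finset.sum_Ioc_consecutive _ (Nat.zero_le _) (by omega)
  have hsingle : Finset.Ioc (i-1) i = {i} := by ext x; simp; omega
  have hlow : ∑ d ∈ Finset.Ioc 0 (i-1), S d * ℓ ^ (k - d) = 0 := by
    apply Finset.sum_eq_zero
    intro d hd
    simp only [Finset.mem_Ioc] at hd
    rw [hSzero d (by omega), zero_mul]
  have hIocIcc : Finset.Ioc i k = Finset.Icc (i+1) k := by ext x; simp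
  have hpow : (0 : ℤ) < ℓ ^ (k - i) := pow_pos hℓpos _
  have hhigh : ∑ d ∈ Finset.Ioc i k, S d * ℓ ^ (k - d)
      ≤ (ℓ - 1) * ∑ j ∈ Finset.Icc (i + 1) k, ℓ ^ (k - j) := by
    rw [hIocIcc, Finset.mul_sum]
    apply Finset.sum_le_sum
    intro d hd
    simp only [Finset.mem_Icc] at hd
    exact mul_le_mul_of_nonneg_right (hSd d (by omega)) (le_of_lt (pow_pos hℓpos _))
  have hmid : S i * ℓ ^ (k - i) ≤ -ℓ ^ (k - i) := by nlinarith [hSi]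
  calc ∑ d ∈ Finset.Icc 1 k, S d * ℓ ^ (k - d)
      = ∑ d ∈ Finset.Ioc 0 (i-1), S d * ℓ ^ (k - d)
        + S i * ℓ ^ (k - i)
        + ∑ d ∈ Finset.Ioc i k, S d * ℓ ^ (k - d) := by
        rw [hIccIoc, ← hsplit1, ← hsplit2, hsingle, Finset.sum_singleton]
    _ ≤ 0 + (-ℓ ^ (k - i)) + (ℓ - 1) * ∑ j ∈ Finset.Icc (i + 1) k, ℓ ^ (k - j) := by
        rw [hlow]; exact add_le_add (add_le_add le_rfl hmid) hhigh
    _ = -ℓ ^ (k - i) + (ℓ - 1) * ∑ j ∈ Finset.Icc (i + 1) k, ℓ ^ (k - j) := by ring
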